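/- arXiv:2008.07396 — 5 statements merged into one kernel-verified Lean document; each statement's English description precedes it below -/
import Mathlib

section
/- Let c > 0 and let y, g : (0, ρ₀] → ℝ be continuous with y differentiable and ρ · y'(ρ) − c · y(ρ) = g(ρ) on (0, ρ₀]. If g(ρ) → G as ρ → 0⁺ for some G ∈ ℝ, then y(ρ) → −G/c as ρ → 0⁺, and consequently ρ · y'(ρ) → 0 as ρ → 0⁺. -/
open Set Filter MeasureTheory Topology

lemma ode_key_formula (ρ₀ c : ℝ) (hc : 0 < c)
    (z z' h : ℝ → ℝ)
    (hhc : ContinuousOn h (Set.Ioc 0 ρ₀))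
    (hz : ∀ ρ ∈ Set.Ioc (0:ℝ) ρ₀, HasDerivAt z (z' ρ) ρ)
    (hode : ∀ ρ ∈ Set.Ioc (0:ℝ) ρ₀, ρ * z' ρ - c * z ρ = h ρ)
    {a b : ℝ} (ha : 0 < a) (hab : a ≤ b) (hb : b ≤ ρ₀) :
    z a * a ^ (-c) = z b * b ^ (-c) - ∫ ρ in a..b, h ρ * ρ ^ (-c - 1) := by
  have hsub : Set.uIcc a b ⊆ Set.Ioc 0 ρ₀ := by
    rw [Set.uIcc_of_le hab]
    intro x hx
    exact ⟨lt_of_lt_of_le ha hx.1, le_trans hx.2 hb⟩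
  have hderiv : ∀ ρ ∈ Set.uIcc a b,
      HasDerivAt (fun ρ => z ρ * ρ ^ (-c)) (h ρ * ρ ^ (-c - 1)) ρ := by
    intro ρ hρ
    have hρ' := hsub hρ
    have hρpos : 0 < ρ := hρ'.1
    have h1 := (hz ρ hρ').mul
      (Real.hasDerivAt_rpow_const (x := ρ) (p := -c) (Or.inl hρpos.ne'))
    show HasDerivAt (z * fun x => x ^ (-c)) (h ρ * ρ ^ (-c - 1)) ρ
    refine h1.congr_deriv ?_
    symm
    have hr2 : ρ ^ (-c - 1) * ρ = ρ ^ (-c) := by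
      rw [← Real.rpow_add_one hρpos.ne']
      norm_num
    have hh2 := hode ρ hρ'
    linear_combination (-(ρ ^ (-c - 1))) * hh2 + z' ρ * hr2
  have hcont : ContinuousOn (fun ρ => h ρ * ρ ^ (-c - 1)) (Set.uIcc a b) := by
    apply ContinuousOn.mul (hhc.mono hsub)
    intro x hx
    exact (Real.continuousAt_rpow_const x (-c-1) (Or.inl (hsub hx).1.ne')).continuousWithinAt
  have hint : IntervalIntegrable (fun ρ => h ρ * ρ ^ (-c - 1)) volume a b :=
    hcont.intervalIntegrable
  have := intervalIntegral.integral_eq_sub_of_hasDerivAt hderiv hint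
  rw [this]
  ring

lemma ode_aux_limit (ρ₀ c : ℝ) (hρ₀ : 0 < ρ₀) (hc : 0 < c)
    (z z' h : ℝ → ℝ)
    (hhc : ContinuousOn h (Set.Ioc 0 ρ₀))
    (hz : ∀ ρ ∈ Set.Ioc (0:ℝ) ρ₀, HasDerivAt z (z' ρ) ρ)
    (hode : ∀ ρ ∈ Set.Ioc (0:ℝ) ρ₀, ρ * z' ρ - c * z ρ = h ρ)
    (hh : Tendsto h (𝓝[>] (0:ℝ)) (𝓝 0)) :
    Tendsto z (𝓝[>] (0:ℝ)) (𝓝 0) := by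
  rw [Metric.tendsto_nhds]
  intro ε hε
  have hε3 : 0 < c * ε / 3 := by positivity
  obtain ⟨δ, hδ, hδh⟩ := Metric.tendsto_nhdsWithin_nhds.mp hh _ hε3
  set b := min (δ/2) ρ₀ with hbdef
  have hb0 : 0 < b := lt_min (by linarith) hρ₀
  have hbρ₀ : b ≤ ρ₀ := min_le_right _ _
  have hbound : ∀ x ∈ Set.Ioc (0:ℝ) b, |h x| ≤ c * ε / 3 := by
    intro x hx
    have hx1 : x ∈ Set.Ioi (0:ℝ) := hx.1
    have hd : dist x 0 < δ := by
      rw [Real.dist_eq, sub_zero, abs_of_pos hx.1]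
      calc x ≤ b := hx.2
        _ ≤ δ/2 := min_le_left _ _
        _ < δ := by linarith
    have := hδh hx1 hd
    rw [Real.dist_eq, sub_zero] at this
    linarith
  set K := |z b| * b ^ (-c) with hKdef
  have hK0 : 0 ≤ K := by positivity
  have hKt : Tendsto (fun a : ℝ => a ^ c * K) (𝓝[>] (0:ℝ)) (𝓝 0) := by
    have hca : ContinuousAt (fun a : ℝ => a ^ c * K) 0 :=
      (Real.continuousAt_rpow_const 0 c (Or.inr hc.le)).mul continuousAt_const
    have h0 : (0:ℝ) ^ c * K = 0 := by rw [Real.zero_rpow hc.ne']; ring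
    have := hca.tendsto
    rw [h0] at this
    exact this.mono_left nhdsWithin_le_nhds
  have h1 : ∀ᶠ a in 𝓝[>] (0:ℝ), a ^ c * K < ε/3 := by
    have : (0:ℝ) < ε/3 := by linarith
    exact hKt.eventually_lt_const this |>.mono (fun x hx => hx)
  have h2 : ∀ᶠ a in 𝓝[>] (0:ℝ), a ∈ Set.Ioc (0:ℝ) b := by
    filter_upwards [Ioc_mem_nhdsGT_of_mem ⟨le_refl 0, hb0⟩] with x hx using hx
  filter_upwards [h1, h2] with a h1a h2a
  have ha0 : 0 < a := h2a.1
  have hab : a ≤ b := h2a.2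
  have key := ode_key_formula ρ₀ c hc z z' h hhc hz hode ha0 hab hbρ₀
  have hac : (0:ℝ) < a ^ c := Real.rpow_pos_of_pos ha0 c
  have hanc : (0:ℝ) < a ^ (-c) := Real.rpow_pos_of_pos ha0 (-c)
  have hbnc : (0:ℝ) < b ^ (-c) := Real.rpow_pos_of_pos hb0 (-c)
  have hcancel : a ^ c * a ^ (-c) = 1 := by
    rw [← Real.rpow_add ha0]; norm_num
  -- integral bound
  have hIoc : Set.uIcc a b ⊆ Set.Ioc 0 b := by
    rw [Set.uIcc_of_le hab]; intro x hx; exact ⟨lt_of_lt_of_le ha0 hx.1, hx.2⟩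
  have hsubρ₀ : Set.Ioc (0:ℝ) b ⊆ Set.Ioc 0 ρ₀ := fun x hx => ⟨hx.1, hx.2.trans hbρ₀⟩
  have hcont1 : ContinuousOn (fun ρ => h ρ * ρ ^ (-c - 1)) (Set.uIcc a b) := by
    apply ContinuousOn.mul (hhc.mono (Set.Subset.trans hIoc hsubρ₀))
    intro x hx
    exact (Real.continuousAt_rpow_const x (-c-1) (Or.inl (hIoc hx).1.ne')).continuousWithinAt
  have hcont2 : ContinuousOn (fun ρ : ℝ => (c * ε / 3) * ρ ^ (-c - 1)) (Set.uIcc a b) := by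
    apply continuousOn_const.mul
    intro x hx
    exact (Real.continuousAt_rpow_const x (-c-1) (Or.inl (hIoc hx).1.ne')).continuousWithinAt
  have hint1 : IntervalIntegrable (fun ρ => |h ρ * ρ ^ (-c - 1)|) volume a b :=
    hcont1.abs.intervalIntegrable
  have hint2 : IntervalIntegrable (fun ρ : ℝ => (c * ε / 3) * ρ ^ (-c - 1)) volume a b :=
    hcont2.intervalIntegrable
  have hrpow_int : (∫ ρ in a..b, ρ ^ (-c - 1)) = (b ^ (-c) - a ^ (-c)) / (-c) := by
    rw [integral_rpow]
    · norm_num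
    · right
      constructor
      · intro hcc; rw [show (-c-1 : ℝ) = -(c+1) by ring] at hcc; nlinarith [neg_eq_iff_eq_neg.mp hcc]
      · rw [Set.uIcc_of_le hab]
        intro hmem
        exact absurd hmem.1 (not_le.mpr ha0)
  have habs : |∫ ρ in a..b, h ρ * ρ ^ (-c - 1)| ≤ (c * ε / 3) * ((b ^ (-c) - a ^ (-c)) / (-c)) := by
    calc |∫ ρ in a..b, h ρ * ρ ^ (-c - 1)| ≤ ∫ ρ in a..b, |h ρ * ρ ^ (-c - 1)| := by
          exact intervalIntegral.abs_integral_le_integral_abs hab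
      _ ≤ ∫ ρ in a..b, (c * ε / 3) * ρ ^ (-c - 1) := by
          apply intervalIntegral.integral_mono_on hab hint1 hint2
          intro x hx
          have hx' : x ∈ Set.Ioc (0:ℝ) b := hIoc (by rw [Set.uIcc_of_le hab]; exact hx)
          have hxpos : 0 < x := hx'.1
          have hrp : (0:ℝ) < x ^ (-c - 1) := Real.rpow_pos_of_pos hxpos _
          rw [abs_mul, abs_of_pos hrp]
          exact mul_le_mul_of_nonneg_right (hbound x hx') hrp.le
      _ = (c * ε / 3) * ((b ^ (-c) - a ^ (-c)) / (-c)) := by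
          rw [intervalIntegral.integral_const_mul, hrpow_int]
  -- now combine
  have hza : z a = a ^ c * (z b * b ^ (-c) - ∫ ρ in a..b, h ρ * ρ ^ (-c - 1)) := by
    rw [← key]
    rw [mul_comm (a^c) _, mul_assoc]
    rw [show a ^ (-c) * a ^ c = 1 by rw [← Real.rpow_add ha0]; norm_num]
    ring
  rw [Real.dist_eq, sub_zero, hza]
  have hb1 : ((b ^ (-c) - a ^ (-c)) / (-c)) = (a ^ (-c) - b ^ (-c)) / c := by
    rw [div_neg, ← neg_div, neg_sub]
  rw [hb1] at habs
  have hmain : |a ^ c * (z b * b ^ (-c) - ∫ ρ in a..b, h ρ * ρ ^ (-c - 1))|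
      ≤ a ^ c * K + a ^ c * ((c * ε / 3) * ((a ^ (-c) - b ^ (-c)) / c)) := by
    rw [abs_mul, abs_of_pos hac]
    have : |z b * b ^ (-c) - ∫ ρ in a..b, h ρ * ρ ^ (-c - 1)|
        ≤ K + (c * ε / 3) * ((a ^ (-c) - b ^ (-c)) / c) := by
      calc |z b * b ^ (-c) - ∫ ρ in a..b, h ρ * ρ ^ (-c - 1)|
          ≤ |z b * b ^ (-c)| + |∫ ρ in a..b, h ρ * ρ ^ (-c - 1)| := abs_sub _ _
        _ ≤ K + (c * ε / 3) * ((a ^ (-c) - b ^ (-c)) / c) := by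
            rw [abs_mul, abs_of_pos hbnc]
            exact add_le_add le_rfl habs
    nlinarith [hac.le]
  have hterm : a ^ c * ((c * ε / 3) * ((a ^ (-c) - b ^ (-c)) / c)) ≤ ε/3 := by
    have : a ^ c * ((c * ε / 3) * ((a ^ (-c) - b ^ (-c)) / c))
        = (ε/3) * (a ^ c * a ^ (-c)) - (ε/3) * (a ^ c * b ^ (-c)) := by
      field_simp
    rw [this, hcancel]
    nlinarith [mul_pos hac hbnc, hε]
  calc |a ^ c * (z b * b ^ (-c) - ∫ ρ in a..b, h ρ * ρ ^ (-c - 1))|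
      ≤ a ^ c * K + a ^ c * ((c * ε / 3) * ((a ^ (-c) - b ^ (-c)) / c)) := hmain
    _ ≤ ε/3 + ε/3 := add_le_add h1a.le hterm
    _ < ε := by linarith

theorem ode_limit_positive (ρ₀ c G : ℝ) (hρ₀ : 0 < ρ₀) (hc : 0 < c)
    (y y' g : ℝ → ℝ)
    (hgc : ContinuousOn g (Set.Ioc 0 ρ₀))
    (hy : ∀ ρ ∈ Set.Ioc (0:ℝ) ρ₀, HasDerivAt y (y' ρ) ρ)
    (hode : ∀ ρ ∈ Set.Ioc (0:ℝ) ρ₀, ρ * y' ρ - c * y ρ = g ρ)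
    (hg : Tendsto g (𝓝[>] (0:ℝ)) (𝓝 G)) :
    Tendsto y (𝓝[>] (0:ℝ)) (𝓝 (-G / c)) ∧
      Tendsto (fun ρ => ρ * y' ρ) (𝓝[>] (0:ℝ)) (𝓝 0) := by
  set z : ℝ → ℝ := fun ρ => y ρ + G / c with hzdef
  set h : ℝ → ℝ := fun ρ => g ρ - G with hhdef
  have hhc : ContinuousOn h (Set.Ioc 0 ρ₀) := hgc.sub continuousOn_const
  have hz : ∀ ρ ∈ Set.Ioc (0:ℝ) ρ₀, HasDerivAt z (y' ρ) ρ := fun ρ hρ =>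
    (hy ρ hρ).add_const _
  have hodez : ∀ ρ ∈ Set.Ioc (0:ℝ) ρ₀, ρ * y' ρ - c * z ρ = h ρ := by
    intro ρ hρ
    have := hode ρ hρ
    simp only [hzdef, hhdef]
    field_simp
    linarith
  have hht : Tendsto h (𝓝[>] (0:ℝ)) (𝓝 0) := by
    have := hg.sub (tendsto_const_nhds (α := ℝ) (x := G) (f := 𝓝[>] (0:ℝ)))
    rw [sub_self] at this
    exact this
  have hzt := ode_aux_limit ρ₀ c hρ₀ hc z y' h hhc hz hodez hht
  have hyt : Tendsto y (𝓝[>] (0:ℝ)) (𝓝 (-G / c)) := by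
    have := hzt.sub (tendsto_const_nhds (α := ℝ) (x := G/c) (f := 𝓝[>] (0:ℝ)))
    have heq : (fun ρ => z ρ - G/c) = y := by
      funext ρ; simp [hzdef]
    rw [heq] at this
    convert this using 2
    ring
  refine ⟨hyt, ?_⟩
  have heventually : ∀ᶠ ρ in 𝓝[>] (0:ℝ), ρ * y' ρ = g ρ + c * y ρ := by
    have hmem : Set.Ioc (0:ℝ) ρ₀ ∈ 𝓝[>] (0:ℝ) :=
      Ioc_mem_nhdsGT_of_mem ⟨le_refl 0, hρ₀⟩
    filter_upwards [hmem] with ρ hρ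
    have := hode ρ hρ
    linarith
  have hlim : Tendsto (fun ρ => g ρ + c * y ρ) (𝓝[>] (0:ℝ)) (𝓝 0) := by
    have := hg.add (hyt.const_mul c)
    have : Tendsto (fun ρ => g ρ + c * y ρ) (𝓝[>] (0:ℝ)) (𝓝 (G + c * (-G/c))) := this
    convert this using 2
    field_simp
    ring
  exact hlim.congr' (heventually.mono fun ρ hρ => hρ.symm)
end

section
/- Let c > 0 and let y, g : (0, ρ₀] → ℝ be continuous with y differentiable and ρ · y'(ρ) − c · y(ρ) = g(ρ) on (0, ρ₀]. Suppose g(ρ) → G as ρ → 0⁺ and ∫₀^{ρ₀} |g(σ) − G|/σ dσ < ∞. Then ∫₀^{ρ₀} |y(σ) + G/c|/σ dσ < ∞. -/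
open Set Filter MeasureTheory Topology

theorem ode_limit_positive_rate (ρ₀ c G : ℝ) (hρ₀ : 0 < ρ₀) (hc : 0 < c)
    (y y' g : ℝ → ℝ)
    (hgc : ContinuousOn g (Set.Ioc 0 ρ₀))
    (hy : ∀ ρ ∈ Set.Ioc (0:ℝ) ρ₀, HasDerivAt y (y' ρ) ρ)
    (hode : ∀ ρ ∈ Set.Ioc (0:ℝ) ρ₀, ρ * y' ρ - c * y ρ = g ρ)
    (hg : Tendsto g (𝓝[>] (0:ℝ)) (𝓝 G))
    (hgint : ∫⁻ σ in Set.Ioc (0:ℝ) ρ₀, ENNReal.ofReal (|g σ - G| / σ) < ⊤) :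
    ∫⁻ σ in Set.Ioc (0:ℝ) ρ₀, ENNReal.ofReal (|y σ + G / c| / σ) < ⊤ := by
  set φ : ℝ → ℝ := fun s => (y s + G / c) * s ^ (-c) with hφ
  have hderiv : ∀ ρ ∈ Ioc (0:ℝ) ρ₀, HasDerivAt φ ((g ρ - G) * ρ ^ (-c - 1)) ρ := by
    intro ρ hρ
    have hρ0 : 0 < ρ := hρ.1
    have h1 : HasDerivAt (fun s => y s + G / c) (y' ρ) ρ := (hy ρ hρ).add_const _
    have h2 : HasDerivAt (fun s : ℝ => s ^ (-c)) (-c * ρ ^ (-c - 1)) ρ := by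
      simpa using Real.hasDerivAt_rpow_const (p := -c) (Or.inl hρ0.ne')
    have h3 := h1.mul h2
    refine h3.congr_deriv ?_
    have hr : ρ ^ (-c) = ρ ^ (-c - 1) * ρ := by
      rw [← Real.rpow_add_one hρ0.ne']; ring_nf
    have hg' := hode ρ hρ
    rw [hr, ← hg']
    field_simp
    ring
  have hcont : ∀ ρ ∈ Ioc (0:ℝ) ρ₀, ContinuousOn (fun σ => (g σ - G) * σ ^ (-c - 1)) (Icc ρ ρ₀) := by
    intro ρ hρ
    have hsub : Icc ρ ρ₀ ⊆ Ioc 0 ρ₀ := fun x hx => ⟨lt_of_lt_of_le hρ.1 hx.1, hx.2⟩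
    refine ContinuousOn.mul ((hgc.mono hsub).sub continuousOn_const) (fun x hx => ?_)
    exact (Real.continuousAt_rpow_const x _ (Or.inl (ne_of_gt (hsub hx).1))).continuousWithinAt
  have key : ∀ ρ ∈ Ioc (0:ℝ) ρ₀, φ ρ₀ - φ ρ = ∫ σ in ρ..ρ₀, (g σ - G) * σ ^ (-c - 1) := by
    intro ρ hρ
    have huIcc : uIcc ρ ρ₀ = Icc ρ ρ₀ := uIcc_of_le hρ.2
    have hsub : uIcc ρ ρ₀ ⊆ Ioc 0 ρ₀ := by
      rw [huIcc]; exact fun x hx => ⟨lt_of_lt_of_le hρ.1 hx.1, hx.2⟩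
    refine (intervalIntegral.integral_eq_sub_of_hasDerivAt (fun x hx => hderiv x (hsub hx)) ?_).symm
    exact (huIcc ▸ hcont ρ hρ).intervalIntegrable
  -- pointwise bound
  have hbound : ∀ ρ ∈ Ioc (0:ℝ) ρ₀,
      |y ρ + G / c| / ρ ≤ ρ ^ (c - 1) * |φ ρ₀| +
        ρ ^ (c - 1) * ∫ σ in ρ..ρ₀, |g σ - G| * σ ^ (-c - 1) := by
    intro ρ hρ
    have hρ0 : 0 < ρ := hρ.1
    have hz : |y ρ + G / c| / ρ = |φ ρ| * ρ ^ (c - 1) := by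
      have h1 : φ ρ * ρ ^ c = y ρ + G / c := by
        rw [hφ]; simp only []
        rw [mul_assoc, ← Real.rpow_add hρ0]
        simp
      rw [← h1, abs_mul, abs_of_nonneg (Real.rpow_nonneg hρ0.le c)]
      rw [div_eq_mul_inv, mul_assoc, ← Real.rpow_neg_one ρ, ← Real.rpow_add hρ0]
      ring_nf
    have habs : |φ ρ| ≤ |φ ρ₀| + ∫ σ in ρ..ρ₀, |g σ - G| * σ ^ (-c - 1) := by
      have h1 : |φ ρ| ≤ |φ ρ₀| + |φ ρ₀ - φ ρ| := by
        have := abs_sub_abs_le_abs_sub (φ ρ) (φ ρ₀)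
        have := abs_sub_comm (φ ρ) (φ ρ₀)
        calc |φ ρ| ≤ |φ ρ₀| + |φ ρ - φ ρ₀| := by nlinarith [abs_sub_abs_le_abs_sub (φ ρ) (φ ρ₀)]
        _ = |φ ρ₀| + |φ ρ₀ - φ ρ| := by rw [abs_sub_comm]
      refine h1.trans (add_le_add_right ?_ _)
      rw [key ρ hρ]
      refine (intervalIntegral.abs_integral_le_integral_abs hρ.2).trans_eq ?_
      refine intervalIntegral.integral_congr (fun σ hσ => ?_)
      rw [uIcc_of_le hρ.2] at hσ
      have hσ0 : 0 < σ := lt_of_lt_of_le hρ.1 hσ.1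
      rw [abs_mul, abs_of_nonneg (Real.rpow_nonneg hσ0.le _)]
    rw [hz]
    have h2 : (0:ℝ) ≤ ρ ^ (c-1) := Real.rpow_nonneg hρ0.le _
    calc |φ ρ| * ρ ^ (c-1) ≤ (|φ ρ₀| + ∫ σ in ρ..ρ₀, |g σ - G| * σ ^ (-c - 1)) * ρ ^ (c-1) :=
        mul_le_mul_of_nonneg_right habs h2
      _ = ρ ^ (c - 1) * |φ ρ₀| + ρ ^ (c - 1) * ∫ σ in ρ..ρ₀, |g σ - G| * σ ^ (-c - 1) := by ring
  set S : Set ℝ := Ioc (0:ℝ) ρ₀ with hS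
  -- measurable modification of g
  have hgam : AEMeasurable g (volume.restrict S) := hgc.aemeasurable measurableSet_Ioc
  obtain ⟨gm, hgm_meas, hgm_ae⟩ := hgam
  have hgm_ae' : ∀ᵐ x ∂(volume : Measure ℝ), x ∈ S → g x = gm x :=
    (ae_restrict_iff' measurableSet_Ioc).mp hgm_ae
  set F : ℝ → ENNReal := fun σ => ENNReal.ofReal (|gm σ - G| * σ ^ (-c - 1)) with hF
  have hFmeas : Measurable F := by
    apply Measurable.ennreal_ofReal
    exact ((hgm_meas.sub measurable_const).abs).mul (by fun_prop)
  -- integrability of the inner integrand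
  have hIint : ∀ ρ ∈ S, IntegrableOn (fun σ => |g σ - G| * σ ^ (-c - 1)) (Ioc ρ ρ₀) := by
    intro ρ hρ
    have hsub : Icc ρ ρ₀ ⊆ S := fun x hx => ⟨lt_of_lt_of_le hρ.1 hx.1, hx.2⟩
    have hcont : ContinuousOn (fun σ => |g σ - G| * σ ^ (-c - 1)) (Icc ρ ρ₀) := by
      refine ContinuousOn.mul ((hgc.mono hsub).sub continuousOn_const).abs (fun x hx => ?_)
      exact (Real.continuousAt_rpow_const x _ (Or.inl (ne_of_gt (hsub hx).1))).continuousWithinAt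
    exact (hcont.integrableOn_compact isCompact_Icc).mono_set Ioc_subset_Icc_self
  -- expressing the inner integral as a lintegral of F
  have hIF : ∀ ρ ∈ S, ENNReal.ofReal (∫ σ in ρ..ρ₀, |g σ - G| * σ ^ (-c - 1))
      = ∫⁻ σ in Ioc ρ ρ₀, F σ := by
    intro ρ hρ
    rw [intervalIntegral.integral_of_le hρ.2,
      ofReal_integral_eq_lintegral_ofReal (hIint ρ hρ)
        (by filter_upwards [ae_restrict_mem (μ := volume) (measurableSet_Ioc (a := ρ) (b := ρ₀))] with σ hσ
            have h0 : 0 < σ := lt_of_lt_of_le hρ.1 hσ.1.le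
            positivity)]
    refine lintegral_congr_ae ?_
    have h1 : ∀ᵐ x ∂(volume.restrict (Ioc ρ ρ₀)), x ∈ S → g x = gm x :=
      ae_restrict_of_ae hgm_ae'
    have h2 := ae_restrict_mem (μ := volume) (measurableSet_Ioc (a := ρ) (b := ρ₀))
    filter_upwards [h1, h2] with σ h1 h2
    rw [hF]
    have hgg : g σ = gm σ := h1 ⟨lt_of_lt_of_le hρ.1 h2.1.le, h2.2⟩
    rw [hgg]
  -- the J integral
  have hJ : ∀ σ ∈ S, (∫⁻ ρ in Ioo (0:ℝ) σ, ENNReal.ofReal (ρ ^ (c-1)))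
      = ENNReal.ofReal (σ ^ c / c) := by
    intro σ hσ
    have hint : IntegrableOn (fun ρ : ℝ => ρ ^ (c-1)) (Ioc 0 σ) :=
      (intervalIntegrable_iff_integrableOn_Ioc_of_le hσ.1.le).mp
        (intervalIntegral.intervalIntegrable_rpow' (by linarith))
    rw [Measure.restrict_congr_set Ioo_ae_eq_Ioc,
      ← ofReal_integral_eq_lintegral_ofReal hint
        (by filter_upwards [ae_restrict_mem (μ := volume) (measurableSet_Ioc (a := (0:ℝ)) (b := σ))] with ρ hρ
            have h0 : 0 < ρ := hρ.1
            positivity)]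
    congr 1
    rw [← intervalIntegral.integral_of_le hσ.1.le, integral_rpow (Or.inl (by linarith))]
    have h1 : c - 1 + 1 = c := by ring
    rw [h1, Real.zero_rpow hc.ne']
    ring
  -- bounding the total integral by the sum of two pieces
  have hAmeas : Measurable (fun ρ : ℝ => ENNReal.ofReal (ρ ^ (c-1) * |φ ρ₀|)) := by fun_prop
  have step1 : ∫⁻ σ in S, ENNReal.ofReal (|y σ + G / c| / σ)
      ≤ (∫⁻ ρ in S, ENNReal.ofReal (ρ ^ (c-1) * |φ ρ₀|))
        + ∫⁻ ρ in S, ENNReal.ofReal (ρ ^ (c-1) * ∫ σ in ρ..ρ₀, |g σ - G| * σ ^ (-c - 1)) := by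
    rw [← lintegral_add_left hAmeas]
    refine lintegral_mono_ae ?_
    filter_upwards [ae_restrict_mem (μ := volume) measurableSet_Ioc] with ρ hρ
    calc ENNReal.ofReal (|y ρ + G / c| / ρ)
        ≤ ENNReal.ofReal (ρ ^ (c-1) * |φ ρ₀| + ρ ^ (c-1) * ∫ σ in ρ..ρ₀, |g σ - G| * σ ^ (-c - 1)) :=
          ENNReal.ofReal_le_ofReal (hbound ρ hρ)
      _ ≤ _ := ENNReal.ofReal_add_le
  have hApart : (∫⁻ ρ in S, ENNReal.ofReal (ρ ^ (c-1) * |φ ρ₀|)) < ⊤ := by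
    have h1 : IntervalIntegrable (fun x : ℝ => x ^ (c-1)) volume 0 ρ₀ :=
      intervalIntegral.intervalIntegrable_rpow' (by linarith)
    exact (((intervalIntegrable_iff_integrableOn_Ioc_of_le hρ₀.le).mp h1).mul_const |φ ρ₀|).lintegral_lt_top
  -- the Tonelli part
  have hgmint : ∫⁻ σ in S, ENNReal.ofReal (|gm σ - G| / σ) < ⊤ := by
    refine lt_of_eq_of_lt (lintegral_congr_ae ?_) hgint
    filter_upwards [hgm_ae] with σ h
    rw [h]
  have hkmeas : AEMeasurable
      (Function.uncurry fun ρ σ => ENNReal.ofReal (ρ ^ (c-1)) * (Ioi ρ).indicator F σ)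
      (((volume : Measure ℝ).restrict S).prod ((volume : Measure ℝ).restrict S)) := by
    have heq : (Function.uncurry fun ρ σ => ENNReal.ofReal (ρ ^ (c-1)) * (Ioi ρ).indicator F σ)
        = {q : ℝ × ℝ | q.1 < q.2}.indicator
            (fun q => ENNReal.ofReal (q.1 ^ (c-1)) * F q.2) := by
      ext p
      by_cases h : p.1 < p.2 <;>
        simp [Function.uncurry, Set.indicator_apply, h]
    rw [heq]
    exact (Measurable.indicator
      ((by fun_prop : Measurable fun q : ℝ × ℝ => ENNReal.ofReal (q.1 ^ (c-1))).mul
        (hFmeas.comp measurable_snd))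
      (measurableSet_lt measurable_fst measurable_snd)).aemeasurable
  have hBpart : (∫⁻ ρ in S, ENNReal.ofReal (ρ ^ (c-1) * ∫ σ in ρ..ρ₀, |g σ - G| * σ ^ (-c - 1))) < ⊤ := by
    have hB1 : ∫⁻ ρ in S, ENNReal.ofReal (ρ ^ (c-1) * ∫ σ in ρ..ρ₀, |g σ - G| * σ ^ (-c - 1))
        = ∫⁻ ρ in S, ∫⁻ σ in S, ENNReal.ofReal (ρ ^ (c-1)) * (Ioi ρ).indicator F σ := by
      refine lintegral_congr_ae ?_
      filter_upwards [ae_restrict_mem (μ := volume) measurableSet_Ioc] with ρ hρ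
      rw [ENNReal.ofReal_mul (Real.rpow_nonneg hρ.1.le _), hIF ρ hρ,
        lintegral_const_mul _ (hFmeas.indicator measurableSet_Ioi)]
      have hset2 : Ioi ρ ∩ Ioc 0 ρ₀ = Ioc ρ ρ₀ := by
        ext σ
        simp only [mem_inter_iff, mem_Ioi, mem_Ioc]
        exact ⟨fun h => ⟨h.1, h.2.2⟩, fun h => ⟨h.1, hρ.1.trans h.1, h.2⟩⟩
      rw [lintegral_indicator measurableSet_Ioi, Measure.restrict_restrict measurableSet_Ioi, hS,
        hset2]
    have hinner : ∀ σ ∈ S, (∫⁻ ρ in S, ENNReal.ofReal (ρ ^ (c-1)) * (Ioi ρ).indicator F σ)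
        = ENNReal.ofReal (σ ^ c / c) * F σ := by
      intro σ hσ
      have heq : (fun ρ => ENNReal.ofReal (ρ ^ (c-1)) * (Ioi ρ).indicator F σ)
          = (Iio σ).indicator (fun ρ => ENNReal.ofReal (ρ ^ (c-1)) * F σ) := by
        ext ρ
        by_cases h : ρ < σ <;> simp [Set.indicator_apply, h]
      rw [heq, lintegral_indicator measurableSet_Iio, Measure.restrict_restrict measurableSet_Iio]
      have hset : Iio σ ∩ S = Ioo 0 σ := by
        ext ρ
        simp only [mem_inter_iff, mem_Iio, mem_Ioc, mem_Ioo, hS]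
        exact ⟨fun h => ⟨h.2.1, h.1⟩, fun h => ⟨h.2, h.1, h.2.le.trans hσ.2⟩⟩
      rw [hset, lintegral_mul_const _ (by fun_prop), hJ σ hσ]
    have harith : ∀ σ ∈ S, ENNReal.ofReal (σ ^ c / c) * F σ
        = ENNReal.ofReal c⁻¹ * ENNReal.ofReal (|gm σ - G| / σ) := by
      intro σ hσ
      simp only [hF]
      rw [← ENNReal.ofReal_mul (div_nonneg (Real.rpow_nonneg hσ.1.le _) hc.le),
        ← ENNReal.ofReal_mul (by positivity : (0:ℝ) ≤ c⁻¹)]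
      congr 1
      have e1 : σ ^ c * σ ^ (-c-1) = σ⁻¹ := by
        rw [← Real.rpow_add hσ.1]
        have h2 : c + (-c-1) = -1 := by ring
        rw [h2, Real.rpow_neg_one]
      calc σ ^ c / c * (|gm σ - G| * σ ^ (-c-1))
          = |gm σ - G| * (σ ^ c * σ ^ (-c-1)) / c := by ring
        _ = c⁻¹ * (|gm σ - G| / σ) := by rw [e1]; ring
    calc ∫⁻ ρ in S, ENNReal.ofReal (ρ ^ (c-1) * ∫ σ in ρ..ρ₀, |g σ - G| * σ ^ (-c - 1))
        = ∫⁻ σ in S, ∫⁻ ρ in S, ENNReal.ofReal (ρ ^ (c-1)) * (Ioi ρ).indicator F σ := by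
          rw [hB1]; exact lintegral_lintegral_swap hkmeas
      _ = ∫⁻ σ in S, ENNReal.ofReal c⁻¹ * ENNReal.ofReal (|gm σ - G| / σ) := by
          refine lintegral_congr_ae ?_
          filter_upwards [ae_restrict_mem (μ := volume) measurableSet_Ioc] with σ hσ
          rw [hinner σ hσ, harith σ hσ]
      _ = ENNReal.ofReal c⁻¹ * ∫⁻ σ in S, ENNReal.ofReal (|gm σ - G| / σ) :=
          lintegral_const_mul _ (by fun_prop)
      _ < ⊤ := ENNReal.mul_lt_top ENNReal.ofReal_lt_top hgmint
  exact lt_of_le_of_lt step1 (ENNReal.add_lt_top.mpr ⟨hApart, hBpart⟩)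
end

section
/- Let y : (0, ρ₀] → ℝ be differentiable with continuous derivative, and suppose there is G ∈ ℝ such that ρ · y'(ρ) → G as ρ → 0⁺ and ∫₀^{ρ₀} |σ · y'(σ) − G|/σ dσ < ∞. Then there exists H ∈ ℝ such that y(ρ) − G · log ρ → H as ρ → 0⁺. -/
open Set Filter MeasureTheory Topology

theorem ode_limit_zero (ρ₀ G : ℝ) (hρ₀ : 0 < ρ₀)
    (y y' : ℝ → ℝ)
    (hy : ∀ ρ ∈ Set.Ioc (0:ℝ) ρ₀, HasDerivAt y (y' ρ) ρ)
    (hy'c : ContinuousOn y' (Set.Ioc 0 ρ₀))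
    (hlim : Tendsto (fun ρ => ρ * y' ρ) (𝓝[>] (0:ℝ)) (𝓝 G))
    (hint : ∫⁻ σ in Set.Ioc (0:ℝ) ρ₀, ENNReal.ofReal (|σ * y' σ - G| / σ) < ⊤) :
    ∃ H : ℝ, Tendsto (fun ρ => y ρ - G * Real.log ρ) (𝓝[>] (0:ℝ)) (𝓝 H) := by
  set g : ℝ → ℝ := fun σ => y' σ - G / σ with hgdef
  have hmeas : MeasurableSet (Set.Ioc (0:ℝ) ρ₀) := measurableSet_Ioc
  have hgc : ContinuousOn g (Set.Ioc 0 ρ₀) := by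
    apply hy'c.sub
    exact continuousOn_const.div continuousOn_id (fun x hx => ne_of_gt hx.1)
  have habs : ∀ σ ∈ Set.Ioc (0:ℝ) ρ₀, ‖g σ‖ = |σ * y' σ - G| / σ := by
    intro σ hσ
    have hσ0 : (0:ℝ) < σ := hσ.1
    have : g σ = (σ * y' σ - G) / σ := by
      simp only [hgdef]; rw [sub_div, mul_div_cancel_left₀ _ hσ0.ne']
    rw [this, Real.norm_eq_abs, abs_div, abs_of_pos hσ0]
  have hgint : MeasureTheory.IntegrableOn g (Set.Ioc 0 ρ₀) := by
    refine ⟨hgc.aestronglyMeasurable hmeas, ?_⟩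
    rw [MeasureTheory.hasFiniteIntegral_iff_norm]
    calc ∫⁻ a in Set.Ioc (0:ℝ) ρ₀, ENNReal.ofReal ‖g a‖
        = ∫⁻ a in Set.Ioc (0:ℝ) ρ₀, ENNReal.ofReal (|a * y' a - G| / a) := by
          apply MeasureTheory.setLIntegral_congr_fun hmeas
          intro a ha; dsimp only
          rw [habs a ha]
      _ < ⊤ := hint
  set h : ℝ → ℝ := Set.indicator (Set.Ioc (0:ℝ) ρ₀) g with hhdef
  have hhint : MeasureTheory.Integrable h := by
    rw [hhdef, MeasureTheory.integrable_indicator_iff hmeas]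
    exact hgint
  have hcont : Continuous fun ρ => ∫ x in ρ₀..ρ, h x := hhint.continuous_primitive ρ₀
  refine ⟨(y ρ₀ - G * Real.log ρ₀) + ∫ x in ρ₀..(0:ℝ), h x, ?_⟩
  have key : ∀ ρ ∈ Set.Ioc (0:ℝ) ρ₀,
      y ρ - G * Real.log ρ = (y ρ₀ - G * Real.log ρ₀) + ∫ x in ρ₀..ρ, h x := by
    intro ρ hρ
    have hsub : Set.uIcc ρ ρ₀ ⊆ Set.Ioc (0:ℝ) ρ₀ := by
      rw [Set.uIcc_of_le hρ.2]
      intro x hx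
      exact ⟨lt_of_lt_of_le hρ.1 hx.1, hx.2⟩
    have hgi : IntervalIntegrable g MeasureTheory.volume ρ ρ₀ :=
      (hgc.mono hsub).intervalIntegrable
    have hftc : ∫ x in ρ..ρ₀, g x = (y ρ₀ - G * Real.log ρ₀) - (y ρ - G * Real.log ρ) := by
      apply intervalIntegral.integral_eq_sub_of_hasDerivAt
      · intro x hx
        have hx' := hsub hx
        have h1 : HasDerivAt y (y' x) x := hy x hx'
        have h2 : HasDerivAt (fun t => G * Real.log t) (G * x⁻¹) x :=
          (Real.hasDerivAt_log (ne_of_gt hx'.1)).const_mul G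
        have := h1.sub h2
        exact (by simpa [hgdef, mul_comm, div_eq_mul_inv] using this : HasDerivAt (y - fun t => G * Real.log t) (g x) x)
      · exact hgi
    have hcg : ∫ x in ρ₀..ρ, h x = ∫ x in ρ₀..ρ, g x := by
      apply intervalIntegral.integral_congr
      intro x hx
      rw [Set.uIcc_comm] at hx
      exact Set.indicator_of_mem (hsub hx) g
    rw [hcg, intervalIntegral.integral_symm, hftc]
    ring
  have hlim' : Tendsto (fun ρ => (y ρ₀ - G * Real.log ρ₀) + ∫ x in ρ₀..ρ, h x)
      (𝓝[>] (0:ℝ)) (𝓝 ((y ρ₀ - G * Real.log ρ₀) + ∫ x in ρ₀..(0:ℝ), h x)) := by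
    have := (hcont.tendsto 0).const_add (y ρ₀ - G * Real.log ρ₀)
    exact this.mono_left nhdsWithin_le_nhds
  apply hlim'.congr'
  filter_upwards [Ioo_mem_nhdsGT_of_mem (Set.left_mem_Ico.mpr hρ₀)] with ρ hρ
  exact (key ρ ⟨hρ.1, le_of_lt hρ.2⟩).symm
end

section
/- Let n ≥ 1 and let f : (0, ρ₀] → ℝ be n times differentiable. Suppose there are a₀, …, a_{n−1}, b, a ∈ ℝ such that f^{(k)}(ρ) → k! a_k as ρ → 0⁺ for 0 ≤ k < n, and f^{(n)}(ρ) − n! b log ρ → n! a as ρ → 0⁺. Then f(ρ) = Σ_{k=0}^{n−1} a_k ρ^k + b ρ^n log ρ + (a − Hₙ b) ρ^n + r(ρ) ρ^n with r(ρ) → 0 as ρ → 0⁺, where Hₙ = 1 + 1/2 + ⋯ + 1/n. -/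
open Set Filter Topology

/-- Repeated L'Hôpital: if `H j` are iterated derivatives on `(0,ρ₀)` up to order `m`
and all tend to `0` at `0⁺`, then `H 0 ρ / ρ^m → 0`. -/
lemma lhop_aux (ρ₀ : ℝ) (hρ₀ : 0 < ρ₀) :
    ∀ (m : ℕ) (H : ℕ → ℝ → ℝ),
    (∀ j < m, ∀ ρ ∈ Set.Ioo (0:ℝ) ρ₀, HasDerivAt (H j) (H (j+1) ρ) ρ) →
    (∀ j ≤ m, Tendsto (H j) (𝓝[>] (0:ℝ)) (𝓝 0)) →
    Tendsto (fun ρ => H 0 ρ / ρ ^ m) (𝓝[>] (0:ℝ)) (𝓝 0) := by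
  intro m
  induction m with
  | zero =>
    intro H _ hlim
    simpa using hlim 0 le_rfl
  | succ m ih =>
    intro H hderiv hlim
    have hIH : Tendsto (fun ρ => H 1 ρ / ρ ^ m) (𝓝[>] (0:ℝ)) (𝓝 0) := by
      refine ih (fun j => H (j+1)) (fun j hj ρ hρ => hderiv (j+1) (by omega) ρ hρ)
        (fun j hj => hlim (j+1) (by omega))
    have hga : Tendsto (fun x : ℝ => x ^ (m+1)) (𝓝[>] (0:ℝ)) (𝓝 0) := by
      have : Tendsto (fun x : ℝ => x ^ (m+1)) (𝓝 (0:ℝ)) (𝓝 0) := by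
        simpa using (continuous_pow (m+1)).tendsto (0:ℝ)
      exact tendsto_nhdsWithin_of_tendsto_nhds this
    have hdiv : Tendsto (fun x : ℝ => H 1 x / (((m:ℝ)+1) * x ^ m)) (𝓝[>] (0:ℝ)) (𝓝 0) := by
      have := hIH.div_const ((m:ℝ)+1)
      rw [zero_div] at this
      exact this.congr (fun x => by rw [div_div, mul_comm])
    refine HasDerivAt.lhopital_zero_right_on_Ioo hρ₀
      (f' := H 1) (g' := fun x => ((m:ℝ)+1) * x ^ m)
      (fun x hx => hderiv 0 (by omega) x hx)
      (fun x hx => by simpa using hasDerivAt_pow (m+1) x)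
      (fun x hx => by have h0 := hx.1; positivity) (hlim 0 (by omega)) hga hdiv

lemma S_hasDerivAt (N : ℕ) (a : ℕ → ℝ) (k : ℕ) (ρ : ℝ) :
    HasDerivAt (fun x : ℝ => ∑ j ∈ Finset.Ico k (N+1), (j.descFactorial k : ℝ) * a j * x ^ (j - k))
      (∑ j ∈ Finset.Ico (k+1) (N+1), (j.descFactorial (k+1) : ℝ) * a j * ρ ^ (j - (k+1))) ρ := by
  have h : HasDerivAt
      (fun x : ℝ => ∑ j ∈ Finset.Ico k (N+1), (j.descFactorial k : ℝ) * a j * x ^ (j - k))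
      (∑ j ∈ Finset.Ico k (N+1),
        (j.descFactorial k : ℝ) * a j * (((j-k : ℕ) : ℝ) * ρ ^ (j - k - 1))) ρ := by
    exact HasDerivAt.fun_sum fun j _ => (hasDerivAt_pow (j-k) ρ).const_mul _
  convert h using 1
  by_cases hk : k < N + 1
  · rw [Finset.sum_eq_sum_Ico_succ_bot hk
      (f := fun j => (j.descFactorial k : ℝ) * a j * (((j-k : ℕ) : ℝ) * ρ ^ (j - k - 1)))]
    simp only [Nat.sub_self, Nat.cast_zero, zero_mul, mul_zero, zero_add]
    refine Finset.sum_congr rfl fun j hj => ?_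
    have hj' : k + 1 ≤ j := (Finset.mem_Ico.mp hj).1
    rw [Nat.descFactorial_succ, Nat.sub_sub]
    push_cast
    ring
  · rw [Finset.Ico_eq_empty (by omega), Finset.Ico_eq_empty (by omega)]
    simp

lemma S_tendsto (N : ℕ) (a : ℕ → ℝ) (k : ℕ) (hk : k ≤ N) :
    Tendsto (fun x : ℝ => ∑ j ∈ Finset.Ico k (N+1), (j.descFactorial k : ℝ) * a j * x ^ (j - k))
      (𝓝[>] (0:ℝ)) (𝓝 ((k.factorial : ℝ) * a k)) := by
  have hc : Continuous (fun x : ℝ =>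
      ∑ j ∈ Finset.Ico k (N+1), (j.descFactorial k : ℝ) * a j * x ^ (j - k)) := by
    exact continuous_finset_sum _ fun j _ => continuous_const.mul (continuous_pow _)
  have hval : ∑ j ∈ Finset.Ico k (N+1), (j.descFactorial k : ℝ) * a j * (0:ℝ) ^ (j - k)
      = (k.factorial : ℝ) * a k := by
    rw [Finset.sum_eq_single_of_mem k (Finset.mem_Ico.mpr ⟨le_rfl, by omega⟩)]
    · simp [Nat.descFactorial_self]
    · intro j hj hjk
      have hj' : k ≤ j := (Finset.mem_Ico.mp hj).1
      rw [zero_pow (by omega), mul_zero]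
  exact tendsto_nhdsWithin_of_tendsto_nhds (hval ▸ hc.tendsto 0)

/-- Taylor expansion with limit-coefficients. -/
lemma taylor_aux (ρ₀ : ℝ) (hρ₀ : 0 < ρ₀) (N : ℕ) (D : ℕ → ℝ → ℝ) (a : ℕ → ℝ)
    (hderiv : ∀ k < N, ∀ ρ ∈ Set.Ioo (0:ℝ) ρ₀, HasDerivAt (D k) (D (k+1) ρ) ρ)
    (hlim : ∀ k ≤ N, Tendsto (D k) (𝓝[>] (0:ℝ)) (𝓝 ((k.factorial : ℝ) * a k))) :
    Tendsto (fun ρ => (D 0 ρ - ∑ j ∈ Finset.range (N+1), a j * ρ ^ j) / ρ ^ N)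
      (𝓝[>] (0:ℝ)) (𝓝 0) := by
  set H : ℕ → ℝ → ℝ := fun k ρ =>
    D k ρ - ∑ j ∈ Finset.Ico k (N+1), (j.descFactorial k : ℝ) * a j * ρ ^ (j - k) with hH
  have key : Tendsto (fun ρ => H 0 ρ / ρ ^ N) (𝓝[>] (0:ℝ)) (𝓝 0) := by
    refine lhop_aux ρ₀ hρ₀ N H (fun j hj ρ hρ => ?_) (fun j hj => ?_)
    · exact (hderiv j hj ρ hρ).sub (S_hasDerivAt N a j ρ)
    · simpa using (hlim j hj).sub (S_tendsto N a j hj)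
  refine key.congr fun ρ => ?_
  have : ∑ j ∈ Finset.Ico 0 (N+1), (j.descFactorial 0 : ℝ) * a j * ρ ^ (j - 0)
      = ∑ j ∈ Finset.range (N+1), a j * ρ ^ j := by
    rw [Finset.range_eq_Ico]
    exact Finset.sum_congr rfl fun j _ => by simp
  rw [hH]
  simp only [this]

noncomputable def Hs (m : ℕ) : ℝ := ∑ i ∈ Finset.range m, (1:ℝ)/(i+1)

lemma Hs_succ_sub (m : ℕ) (hm : 1 ≤ m) : Hs m = Hs (m-1) + 1/(m:ℝ) := by
  obtain ⟨p, rfl⟩ : ∃ p, m = p + 1 := ⟨m - 1, by omega⟩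
  simp only [Hs, Finset.sum_range_succ, Nat.add_sub_cancel]
  push_cast
  ring

lemma L_hasDerivAt (n : ℕ) (b : ℝ) (k : ℕ) (hk : k < n) (ρ : ℝ) (hρ : 0 < ρ) :
    HasDerivAt
      (fun x : ℝ => b * (n.descFactorial k : ℝ) * x ^ (n-k) * (Real.log x + Hs n - Hs (n-k)))
      (b * (n.descFactorial (k+1) : ℝ) * ρ ^ (n-(k+1)) * (Real.log ρ + Hs n - Hs (n-(k+1)))) ρ := by
  set m := n - k with hm
  have hm1 : 1 ≤ m := by omega
  have h1 : HasDerivAt (fun x : ℝ => Real.log x + Hs n - Hs m) ρ⁻¹ ρ :=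
    ((Real.hasDerivAt_log hρ.ne').add_const (Hs n)).sub_const _
  have h2 := ((hasDerivAt_pow m ρ).mul h1).const_mul (b * (n.descFactorial k : ℝ))
  have hfun : (fun x : ℝ => b * (n.descFactorial k : ℝ) * x ^ m * (Real.log x + Hs n - Hs m))
      = fun x : ℝ => b * (n.descFactorial k : ℝ) * (x ^ m * (Real.log x + Hs n - Hs m)) := by
    funext x; ring
  rw [hfun]
  refine h2.congr_deriv ?_
  have e1 : n - (k+1) = m - 1 := by omega
  have e2 : (n.descFactorial (k+1) : ℝ) = (m : ℝ) * (n.descFactorial k : ℝ) := by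
    rw [Nat.descFactorial_succ]; push_cast; rfl
  have e3 : ρ ^ m = ρ ^ (m-1) * ρ := by
    rw [← pow_succ]; congr 1; omega
  have e4 : Hs (m-1) = Hs m - 1/(m:ℝ) := by rw [Hs_succ_sub m hm1]; ring
  have hmne : (m:ℝ) ≠ 0 := by positivity
  rw [e1, e2, e3, e4]
  field_simp
  ring

lemma L_tendsto_zero (n : ℕ) (b : ℝ) (k : ℕ) (hk : k < n) :
    Tendsto (fun x : ℝ => b * (n.descFactorial k : ℝ) * x ^ (n-k) * (Real.log x + Hs n - Hs (n-k)))
      (𝓝[>] (0:ℝ)) (𝓝 0) := by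
  set m := n - k with hm
  have hm1 : 1 ≤ m := by omega
  have T1 : Tendsto (fun x : ℝ => x ^ m * Real.log x) (𝓝[>] (0:ℝ)) (𝓝 0) := by
    have := tendsto_log_mul_rpow_nhdsGT_zero (r := (m:ℝ)) (by positivity)
    refine this.congr' ?_
    filter_upwards [self_mem_nhdsWithin] with x hx
    rw [Real.rpow_natCast]
    ring
  have T2 : Tendsto (fun x : ℝ => x ^ m) (𝓝[>] (0:ℝ)) (𝓝 0) := by
    refine tendsto_nhdsWithin_of_tendsto_nhds ?_
    have : Tendsto (fun x : ℝ => x ^ m) (𝓝 (0:ℝ)) (𝓝 ((0:ℝ) ^ m)) := (continuous_pow m).tendsto 0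
    simpa [zero_pow (by omega : m ≠ 0)] using this
  have := (T1.const_mul (b * (n.descFactorial k : ℝ))).add
    (T2.const_mul (b * (n.descFactorial k : ℝ) * (Hs n - Hs m)))
  simp only [mul_zero, add_zero] at this
  refine this.congr fun x => ?_
  ring

theorem polyhomogeneous_expansion (ρ₀ : ℝ) (hρ₀ : 0 < ρ₀) (n : ℕ) (hn : 1 ≤ n)
    (D : ℕ → ℝ → ℝ) (f : ℝ → ℝ) (a' : ℕ → ℝ) (b a : ℝ)
    (hD0 : D 0 = f)
    (hderiv : ∀ k < n, ∀ ρ ∈ Set.Ioc (0:ℝ) ρ₀, HasDerivAt (D k) (D (k+1) ρ) ρ)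
    (hlim : ∀ k < n, Tendsto (D k) (𝓝[>] (0:ℝ)) (𝓝 ((Nat.factorial k : ℝ) * a' k)))
    (hlog : Tendsto (fun ρ => D n ρ - (Nat.factorial n : ℝ) * b * Real.log ρ)
      (𝓝[>] (0:ℝ)) (𝓝 ((Nat.factorial n : ℝ) * a))) :
    ∃ r : ℝ → ℝ, Tendsto r (𝓝[>] (0:ℝ)) (𝓝 0) ∧
      ∀ ρ ∈ Set.Ioc (0:ℝ) ρ₀,
        f ρ = (∑ k ∈ Finset.range n, a' k * ρ ^ k)
          + b * ρ ^ n * Real.log ρ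
          + (a - (∑ k ∈ Finset.range n, (1 : ℝ) / (k + 1)) * b) * ρ ^ n
          + r ρ * ρ ^ n := by
  set aa : ℕ → ℝ := fun k => if k = n then a - Hs n * b else a' k with haa
  set D' : ℕ → ℝ → ℝ := fun k ρ =>
    D k ρ - b * (n.descFactorial k : ℝ) * ρ ^ (n-k) * (Real.log ρ + Hs n - Hs (n-k)) with hD'
  have hderiv' : ∀ k < n, ∀ ρ ∈ Set.Ioo (0:ℝ) ρ₀, HasDerivAt (D' k) (D' (k+1) ρ) ρ := by
    intro k hk ρ hρ
    exact (hderiv k hk ρ ⟨hρ.1, hρ.2.le⟩).sub (L_hasDerivAt n b k hk ρ hρ.1)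
  have hlim' : ∀ k ≤ n, Tendsto (D' k) (𝓝[>] (0:ℝ)) (𝓝 ((k.factorial : ℝ) * aa k)) := by
    intro k hk
    rcases lt_or_eq_of_le hk with hk | rfl
    · have := (hlim k hk).sub (L_tendsto_zero n b k hk)
      rw [sub_zero] at this
      have he : aa k = a' k := if_neg hk.ne
      rw [he]
      exact this
    · have h1 : Tendsto (fun ρ => (D k ρ - (k.factorial : ℝ) * b * Real.log ρ)
          - (k.factorial : ℝ) * b * Hs k) (𝓝[>] (0:ℝ))
          (𝓝 ((k.factorial : ℝ) * a - (k.factorial : ℝ) * b * Hs k)) := hlog.sub_const _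
      have hfun : D' k = fun ρ => (D k ρ - (k.factorial : ℝ) * b * Real.log ρ)
          - (k.factorial : ℝ) * b * Hs k := by
        funext ρ
        rw [hD']
        simp only [Nat.sub_self, pow_zero, Nat.descFactorial_self]
        have : Hs 0 = 0 := by simp [Hs]
        rw [this]
        ring
      have hval : (k.factorial : ℝ) * aa k
          = (k.factorial : ℝ) * a - (k.factorial : ℝ) * b * Hs k := by
        have h2 : aa k = a - Hs k * b := by rw [haa]; simp
        rw [h2]; ring
      rw [hfun, hval]
      exact h1
  have key := taylor_aux ρ₀ hρ₀ n D' aa hderiv' hlim'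
  refine ⟨fun ρ => (f ρ - (∑ k ∈ Finset.range n, a' k * ρ ^ k)
    - b * ρ ^ n * Real.log ρ - (a - Hs n * b) * ρ ^ n) / ρ ^ n, ?_, ?_⟩
  · refine key.congr fun ρ => ?_
    congr 1
    have h0 : D' 0 ρ = f ρ - b * ρ ^ n * Real.log ρ := by
      rw [hD']
      simp only [Nat.sub_zero, Nat.descFactorial_zero, Nat.cast_one, hD0]
      ring
    have hsum : ∑ j ∈ Finset.range (n+1), aa j * ρ ^ j
        = (∑ j ∈ Finset.range n, a' j * ρ ^ j) + (a - Hs n * b) * ρ ^ n := by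
      rw [Finset.sum_range_succ]
      congr 1
      · refine Finset.sum_congr rfl fun j hj => ?_
        rw [haa]
        simp only [if_neg (Finset.mem_range.mp hj).ne]
      · rw [haa]; simp
    rw [h0, hsum]
    ring
  · intro ρ hρ
    have hρn : ρ ^ n ≠ 0 := pow_ne_zero n hρ.1.ne'
    have hHs : Hs n = ∑ k ∈ Finset.range n, (1:ℝ)/(k+1) := rfl
    rw [div_mul_cancel₀ _ hρn, ← hHs]
    ring
end

section
/- Fix M ∈ ℝ and let r > 0 be large enough that r⁴ + r² − M > 0 and 1 − (1+4M)ρ⁴/16 > 0, where ρ > 0 is defined by ρ² = 4 / ((2r² + 1) + 2√(r⁴ + r² − M)). Then: (i) r² = ρ^{−2} (1 − ρ²/2 + (1+4M)ρ⁴/16), and (ii) r² + 1 − M r^{−2} = ρ^{−2} (1 − (1+4M)ρ⁴/16)² · (1 − ρ²/2 + (1+4M)ρ⁴/16)^{−1}. -/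
theorem schw_ads_fg_coordinate_n4 (M r ρ : ℝ) (hr : 0 < r) (hρ : 0 < ρ)
    (h1 : 0 < r ^ 4 + r ^ 2 - M)
    (hρdef : ρ ^ 2 = 4 / ((2 * r ^ 2 + 1) + 2 * Real.sqrt (r ^ 4 + r ^ 2 - M)))
    (h2 : 0 < 1 - (1 + 4 * M) * ρ ^ 4 / 16) :
    r ^ 2 = (1 / ρ ^ 2) * (1 - ρ ^ 2 / 2 + (1 + 4 * M) * ρ ^ 4 / 16) ∧
    r ^ 2 + 1 - M / r ^ 2
      = (1 / ρ ^ 2) * (1 - (1 + 4 * M) * ρ ^ 4 / 16) ^ 2 *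
          (1 - ρ ^ 2 / 2 + (1 + 4 * M) * ρ ^ 4 / 16)⁻¹ := by
  set s := Real.sqrt (r ^ 4 + r ^ 2 - M) with hs
  have hs2 : s ^ 2 = r ^ 4 + r ^ 2 - M := Real.sq_sqrt h1.le
  have hsnn : 0 ≤ s := Real.sqrt_nonneg _
  have hden : (0:ℝ) < (2 * r ^ 2 + 1) + 2 * s := by positivity
  have hkey : ρ ^ 2 * ((2 * r ^ 2 + 1) + 2 * s) = 4 := by
    rw [hρdef]; field_simp
  have h5 : 2 * ρ ^ 2 * s = 4 - 2 * ρ ^ 2 * r ^ 2 - ρ ^ 2 := by linarith [hkey]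
  have hsq : 4 * ρ ^ 4 * (r ^ 4 + r ^ 2 - M) = (4 - 2 * ρ ^ 2 * r ^ 2 - ρ ^ 2) ^ 2 := by
    have := congrArg (· ^ 2) h5
    nlinarith [this, hs2]
  have hρ2 : ρ ^ 2 ≠ 0 := by positivity
  have hr2 : r ^ 2 ≠ 0 := by positivity
  have hA : ρ ^ 2 * r ^ 2 = 1 - ρ ^ 2 / 2 + (1 + 4 * M) * ρ ^ 4 / 16 := by
    linear_combination (1/16) * hsq
  have hApos : (0:ℝ) < 1 - ρ ^ 2 / 2 + (1 + 4 * M) * ρ ^ 4 / 16 := by nlinarith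
  constructor
  · field_simp
    linear_combination 32 * hA
  · have hB : ρ ^ 4 * (r ^ 4 + r ^ 2 - M) = (1 - (1 + 4 * M) * ρ ^ 4 / 16) ^ 2 := by
      linear_combination (ρ ^ 2 * r ^ 2 + (1 - ρ ^ 2 / 2 + (1 + 4 * M) * ρ ^ 4 / 16) + ρ ^ 2) * hA
    rw [← hA]
    field_simp
    linear_combination 256 * hB
end
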